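/- Finite-time convergence for deep GRUs (Lemma 4): consider the deep GRU with M layers driven by an input sequence u with ‖u(t)‖_∞ ≤ 1 for all t, from arbitrary layer initial states x̄^i ∈ ℝ^{n_x^i}. Then (a) for each layer i and each time k at which ‖x^i(k)‖_∞ > 1 it holds that ‖x^i(k+1)‖_∞ < ‖x^i(k)‖_∞, and (b) there exists a finite k̄ ≥ 0, depending only on the initial states and the weights, such that ‖x^i(k)‖_∞ ≤ 1 for all layers i and all k ≥ k̄. -/

import Mathlib

open Real Filter

/-- The _root_.sigmoid activation function. -/
noncomputable def _root_.sigmoid (s : ℝ) : ℝ := 1 / (1 + Real.exp (-s))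

/-- Induced infinity norm of a matrix (maximum absolute row sum). -/
noncomputable def matNorm {n m : ℕ} (A : Matrix (Fin n) (Fin m) ℝ) : ℝ :=
  ⨆ i, ∑ j, |A i j|

/-- Infinity norm of the horizontal concatenation `[A B c]`
(maximum absolute row sum of the concatenated matrix). -/
noncomputable def catNorm {n m p : ℕ} (A : Matrix (Fin n) (Fin m) ℝ)
    (B : Matrix (Fin n) (Fin p) ℝ) (c : Fin n → ℝ) : ℝ :=
  ⨆ i, (∑ j, |A i j| + ∑ j, |B i j| + |c i|)

/-- One step of the single-layer GRU:
`x⁺ = z ∘ x + (1 - z) ∘ tanh(W_r u + U_r (f ∘ x) + b_r)`,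
`z = σ(W_z u + U_z x + b_z)`, `f = σ(W_f u + U_f x + b_f)`. -/
noncomputable def gruStep {nu nx : ℕ}
    (Wz Wf Wr : Matrix (Fin nx) (Fin nu) ℝ)
    (Uz Uf Ur : Matrix (Fin nx) (Fin nx) ℝ)
    (bz bf br : Fin nx → ℝ)
    (u : Fin nu → ℝ) (x : Fin nx → ℝ) : Fin nx → ℝ :=
  let z : Fin nx → ℝ := fun i => _root_.sigmoid ((Wz.mulVec u + Uz.mulVec x + bz) i)
  let f : Fin nx → ℝ := fun i => _root_.sigmoid ((Wf.mulVec u + Uf.mulVec x + bf) i)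
  let r : Fin nx → ℝ := fun i => Real.tanh ((Wr.mulVec u + Ur.mulVec (f * x) + br) i)
  fun j => z j * x j + (1 - z j) * r j

/-- Input dimension of layer `i` of a deep GRU: the first layer is fed by the
external input (dimension `nu`), layer `i+1` is fed by the state of layer `i`. -/
def inDim (nu : ℕ) (n : ℕ → ℕ) : ℕ → ℕ
  | 0 => nu
  | i + 1 => n i


lemma sigmoid_pos (s : ℝ) : 0 < _root_.sigmoid s := by
  unfold _root_.sigmoid; positivity

lemma sigmoid_lt_one (s : ℝ) : _root_.sigmoid s < 1 := by
  unfold _root_.sigmoid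
  rw [div_lt_one (by positivity)]
  linarith [Real.exp_pos (-s)]

lemma _root_.sigmoid_mono {s t : ℝ} (h : s ≤ t) : _root_.sigmoid s ≤ _root_.sigmoid t := by
  unfold _root_.sigmoid
  apply one_div_le_one_div_of_le (by positivity)
  have := Real.exp_le_exp.mpr (neg_le_neg h)
  linarith

lemma tanh_lt_one' (s : ℝ) : Real.tanh s < 1 := by
  rw [Real.tanh_eq_sinh_div_cosh, div_lt_one (Real.cosh_pos s)]
  exact Real.sinh_lt_cosh s

lemma tanh_nonneg' {s : ℝ} (h : 0 ≤ s) : 0 ≤ Real.tanh s := by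
  rw [Real.tanh_eq_sinh_div_cosh]
  exact div_nonneg (Real.sinh_nonneg_iff.mpr h) (Real.cosh_pos s).le

lemma abs_tanh_lt_one (s : ℝ) : |Real.tanh s| < 1 := by
  rw [abs_lt]
  constructor
  · have := tanh_lt_one' (-s); rw [Real.tanh_neg] at this; linarith
  · exact tanh_lt_one' s

lemma tanh_mono {s t : ℝ} (h : s ≤ t) : Real.tanh s ≤ Real.tanh t := by
  rw [Real.tanh_eq_sinh_div_cosh, Real.tanh_eq_sinh_div_cosh,
    div_le_div_iff₀ (Real.cosh_pos s) (Real.cosh_pos t)]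
  have h1 : Real.sinh (s - t) ≤ 0 := by
    have := Real.sinh_le_sinh.mpr (show s - t ≤ 0 by linarith)
    simpa using this
  rw [Real.sinh_sub] at h1
  linarith

lemma abs_tanh_le (s : ℝ) : |Real.tanh s| ≤ Real.tanh |s| := by
  rcases le_total 0 s with h | h
  · rw [abs_of_nonneg h, abs_of_nonneg (tanh_nonneg' h)]
  · rw [abs_of_nonpos h]
    have h2 : Real.tanh s ≤ 0 := by
      have := tanh_nonneg' (show 0 ≤ -s by linarith)
      rw [Real.tanh_neg] at this; linarith
    rw [abs_of_nonpos h2, ← Real.tanh_neg]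

lemma rowSum_le_matNorm {n m : ℕ} (A : Matrix (Fin n) (Fin m) ℝ) (i : Fin n) :
    ∑ j, |A i j| ≤ matNorm A :=
  le_ciSup (f := fun i => ∑ j, |A i j|) (Set.Finite.bddAbove (Set.finite_range _)) i

lemma matNorm_nonneg {n m : ℕ} (A : Matrix (Fin n) (Fin m) ℝ) : 0 ≤ matNorm A := by
  rcases Nat.eq_zero_or_pos n with h | h
  · subst h
    rw [matNorm, Real.iSup_of_isEmpty]
  · exact le_trans (Finset.sum_nonneg fun j _ => abs_nonneg _) (rowSum_le_matNorm A ⟨0, h⟩)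

lemma abs_mulVec_le {n m : ℕ} (A : Matrix (Fin n) (Fin m) ℝ) (v : Fin m → ℝ)
    (C : ℝ) (hv : ∀ j, |v j| ≤ C) (i : Fin n) :
    |A.mulVec v i| ≤ (∑ j, |A i j|) * C := by
  calc |A.mulVec v i| = |∑ j, A i j * v j| := by
        simp [Matrix.mulVec, dotProduct]
    _ ≤ ∑ j, |A i j * v j| := Finset.abs_sum_le_sum_abs _ _
    _ = ∑ j, |A i j| * |v j| := by simp [abs_mul]
    _ ≤ ∑ j, |A i j| * C :=
        Finset.sum_le_sum fun j _ => mul_le_mul_of_nonneg_left (hv j) (abs_nonneg _)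
    _ = (∑ j, |A i j|) * C := by rw [← Finset.sum_mul]

lemma abs_add3 (a b c : ℝ) : |a + b + c| ≤ |a| + |b| + |c| := le_trans (abs_add_le _ _) (by linarith [abs_add_le a b])

/-- Part (a) core: strict decrease when the norm exceeds 1. -/
lemma gru_decrease {nu nx : ℕ} (Wz Wf Wr : Matrix (Fin nx) (Fin nu) ℝ)
    (Uz Uf Ur : Matrix (Fin nx) (Fin nx) ℝ) (bz bf br : Fin nx → ℝ)
    (u : Fin nu → ℝ) (x : Fin nx → ℝ) (hx : 1 < ‖x‖) :
    ‖gruStep Wz Wf Wr Uz Uf Ur bz bf br u x‖ < ‖x‖ := by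
  rw [pi_norm_lt_iff (lt_trans one_pos hx)]
  intro j
  simp only [gruStep, Real.norm_eq_abs]
  have key : ∀ a b : ℝ, |_root_.sigmoid a * x j + (1 - _root_.sigmoid a) * Real.tanh b| < ‖x‖ := by
    intro a b
    have h1 := _root_.sigmoid_pos a
    have h2 := _root_.sigmoid_lt_one a
    have h3 := _root_.abs_tanh_lt_one b
    have h4 : |x j| ≤ ‖x‖ := by rw [← Real.norm_eq_abs]; exact norm_le_pi_norm x j
    calc |_root_.sigmoid a * x j + (1 - _root_.sigmoid a) * Real.tanh b|
        ≤ |_root_.sigmoid a * x j| + |(1 - _root_.sigmoid a) * Real.tanh b| := abs_add_le _ _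
      _ = _root_.sigmoid a * |x j| + (1 - _root_.sigmoid a) * |Real.tanh b| := by
          rw [abs_mul, abs_mul, abs_of_pos h1,
            abs_of_pos (show (0:ℝ) < 1 - _root_.sigmoid a by linarith)]
      _ < ‖x‖ := by nlinarith
  exact key _ _

/-- Boundedness: the norm never exceeds `max ‖x‖ 1`. -/
lemma gru_bounded {nu nx : ℕ} (Wz Wf Wr : Matrix (Fin nx) (Fin nu) ℝ)
    (Uz Uf Ur : Matrix (Fin nx) (Fin nx) ℝ) (bz bf br : Fin nx → ℝ)
    (u : Fin nu → ℝ) (x : Fin nx → ℝ) :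
    ‖gruStep Wz Wf Wr Uz Uf Ur bz bf br u x‖ ≤ max ‖x‖ 1 := by
  rw [pi_norm_le_iff_of_nonneg (le_trans zero_le_one (le_max_right _ _))]
  intro j
  simp only [gruStep, Real.norm_eq_abs]
  have key : ∀ a b : ℝ, |_root_.sigmoid a * x j + (1 - _root_.sigmoid a) * Real.tanh b| ≤ max ‖x‖ 1 := by
    intro a b
    have h1 := _root_.sigmoid_pos a
    have h2 := _root_.sigmoid_lt_one a
    have h3 := _root_.abs_tanh_lt_one b
    have h4 : |x j| ≤ max ‖x‖ 1 := le_trans (by rw [← Real.norm_eq_abs]; exact norm_le_pi_norm x j) (le_max_left _ _)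
    have h5 : (1:ℝ) ≤ max ‖x‖ 1 := le_max_right _ _
    calc |_root_.sigmoid a * x j + (1 - _root_.sigmoid a) * Real.tanh b|
        ≤ |_root_.sigmoid a * x j| + |(1 - _root_.sigmoid a) * Real.tanh b| := abs_add_le _ _
      _ = _root_.sigmoid a * |x j| + (1 - _root_.sigmoid a) * |Real.tanh b| := by
          rw [abs_mul, abs_mul, abs_of_pos h1,
            abs_of_pos (show (0:ℝ) < 1 - _root_.sigmoid a by linarith)]
      _ ≤ max ‖x‖ 1 := by nlinarith
  exact key _ _

/-- Contraction: quantitative bound in terms of the weight norms. -/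
lemma gru_contract {nu nx : ℕ} (Wz Wf Wr : Matrix (Fin nx) (Fin nu) ℝ)
    (Uz Uf Ur : Matrix (Fin nx) (Fin nx) ℝ) (bz bf br : Fin nx → ℝ)
    (u : Fin nu → ℝ) (x : Fin nx → ℝ) (U B : ℝ)
    (hU : 0 ≤ U) (hB : 1 ≤ B) (hu : ‖u‖ ≤ U) (hx : ‖x‖ ≤ B) :
    ‖gruStep Wz Wf Wr Uz Uf Ur bz bf br u x‖ ≤
      Real.tanh (matNorm Wr * U + matNorm Ur * B + ‖br‖) +
      _root_.sigmoid (matNorm Wz * U + matNorm Uz * B + ‖bz‖) *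
        (max ‖x‖ 1 - Real.tanh (matNorm Wr * U + matNorm Ur * B + ‖br‖)) := by
  set ρ := Real.tanh (matNorm Wr * U + matNorm Ur * B + ‖br‖) with hρdef
  set c := _root_.sigmoid (matNorm Wz * U + matNorm Uz * B + ‖bz‖) with hcdef
  have hρ0 : 0 ≤ ρ := tanh_nonneg' (by
    have := matNorm_nonneg Wr; have := matNorm_nonneg Ur
    have : (0:ℝ) ≤ ‖br‖ := norm_nonneg _
    nlinarith [matNorm_nonneg Wr, matNorm_nonneg Ur, norm_nonneg br])
  have hρ1 : ρ < 1 := tanh_lt_one' _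
  have hc0 : 0 < c := _root_.sigmoid_pos _
  have hc1 : c < 1 := _root_.sigmoid_lt_one _
  have hmax1 : (1:ℝ) ≤ max ‖x‖ 1 := le_max_right _ _
  rw [pi_norm_le_iff_of_nonneg (by nlinarith)]
  intro j
  -- bounds on inputs componentwise
  have hucomp : ∀ l, |u l| ≤ U := fun l => le_trans (by rw [← Real.norm_eq_abs]; exact norm_le_pi_norm u l) hu
  have hxcomp : ∀ l, |x l| ≤ B := fun l => le_trans (by rw [← Real.norm_eq_abs]; exact norm_le_pi_norm x l) hx
  simp only [gruStep, Real.norm_eq_abs]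
  -- the gate argument bound
  have hzarg : (Wz.mulVec u + Uz.mulVec x + bz) j ≤ matNorm Wz * U + matNorm Uz * B + ‖bz‖ := by
    have h1 := abs_mulVec_le Wz u U hucomp j
    have h2 := abs_mulVec_le Uz x B hxcomp j
    have h3 : |bz j| ≤ ‖bz‖ := by rw [← Real.norm_eq_abs]; exact norm_le_pi_norm bz j
    have h4 : (∑ l, |Wz j l|) * U ≤ matNorm Wz * U :=
      mul_le_mul_of_nonneg_right (rowSum_le_matNorm Wz j) hU
    have h5 : (∑ l, |Uz j l|) * B ≤ matNorm Uz * B :=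
      mul_le_mul_of_nonneg_right (rowSum_le_matNorm Uz j) (by linarith)
    have := abs_le.mp h1
    have := abs_le.mp h2
    have := abs_le.mp h3
    simp only [Pi.add_apply]
    linarith [(abs_le.mp h1).2, (abs_le.mp h2).2, (abs_le.mp h3).2]
  have hz : _root_.sigmoid ((Wz.mulVec u + Uz.mulVec x + bz) j) ≤ c := _root_.sigmoid_mono hzarg
  -- the tanh bound
  have hfx : ∀ l, |((fun i => _root_.sigmoid ((Wf.mulVec u + Uf.mulVec x + bf) i)) * x) l| ≤ B := by
    intro l
    simp only [Pi.mul_apply, abs_mul]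
    have h1 := _root_.sigmoid_pos ((Wf.mulVec u + Uf.mulVec x + bf) l)
    have h2 := _root_.sigmoid_lt_one ((Wf.mulVec u + Uf.mulVec x + bf) l)
    have h3 := hxcomp l
    rw [abs_of_pos h1]
    nlinarith [abs_nonneg (x l)]
  have hrarg : |(Wr.mulVec u + Ur.mulVec ((fun i => _root_.sigmoid ((Wf.mulVec u + Uf.mulVec x + bf) i)) * x) + br) j|
      ≤ matNorm Wr * U + matNorm Ur * B + ‖br‖ := by
    have h1 := abs_mulVec_le Wr u U hucomp j
    have h2 := abs_mulVec_le Ur _ B hfx j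
    have h3 : |br j| ≤ ‖br‖ := by rw [← Real.norm_eq_abs]; exact norm_le_pi_norm br j
    have h4 : (∑ l, |Wr j l|) * U ≤ matNorm Wr * U :=
      mul_le_mul_of_nonneg_right (rowSum_le_matNorm Wr j) hU
    have h5 : (∑ l, |Ur j l|) * B ≤ matNorm Ur * B :=
      mul_le_mul_of_nonneg_right (rowSum_le_matNorm Ur j) (by linarith)
    calc |(Wr.mulVec u + Ur.mulVec ((fun i => _root_.sigmoid ((Wf.mulVec u + Uf.mulVec x + bf) i)) * x) + br) j|
        = |Wr.mulVec u j + Ur.mulVec ((fun i => _root_.sigmoid ((Wf.mulVec u + Uf.mulVec x + bf) i)) * x) j + br j| := rfl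
      _ ≤ |Wr.mulVec u j| + |Ur.mulVec ((fun i => _root_.sigmoid ((Wf.mulVec u + Uf.mulVec x + bf) i)) * x) j| + |br j| := abs_add3 _ _ _
      _ ≤ matNorm Wr * U + matNorm Ur * B + ‖br‖ := by linarith
  have hr : |Real.tanh ((Wr.mulVec u + Ur.mulVec ((fun i => _root_.sigmoid ((Wf.mulVec u + Uf.mulVec x + bf) i)) * x) + br) j)| ≤ ρ := by
    refine le_trans (abs_tanh_le _) (le_trans (tanh_mono ?_) (le_of_eq rfl))
    exact hrarg
  set zj := _root_.sigmoid ((Wz.mulVec u + Uz.mulVec x + bz) j) with hzj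
  set rj := Real.tanh ((Wr.mulVec u + Ur.mulVec ((fun i => _root_.sigmoid ((Wf.mulVec u + Uf.mulVec x + bf) i)) * x) + br) j) with hrj
  have hz0 : 0 < zj := _root_.sigmoid_pos _
  have hz1 : zj < 1 := _root_.sigmoid_lt_one _
  have h4 : |x j| ≤ max ‖x‖ 1 := le_trans (by rw [← Real.norm_eq_abs]; exact norm_le_pi_norm x j) (le_max_left _ _)
  calc |zj * x j + (1 - zj) * rj|
      ≤ |zj * x j| + |(1 - zj) * rj| := abs_add_le _ _
    _ = zj * |x j| + (1 - zj) * |rj| := by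
        rw [abs_mul, abs_mul, abs_of_pos hz0,
          abs_of_pos (show (0:ℝ) < 1 - zj by linarith)]
    _ ≤ ρ + c * (max ‖x‖ 1 - ρ) := by nlinarith


/-- Layer state bound. -/
noncomputable def layerB {n : ℕ → ℕ} (xbar : ∀ i : ℕ, Fin (n i) → ℝ) (i : ℕ) : ℝ :=
  max ‖xbar i‖ 1

/-- Layer input bound. -/
noncomputable def layerU {n : ℕ → ℕ} (xbar : ∀ i : ℕ, Fin (n i) → ℝ) : ℕ → ℝ
  | 0 => 1
  | i + 1 => layerB xbar i

lemma layerB_ge_one {n : ℕ → ℕ} (xbar : ∀ i : ℕ, Fin (n i) → ℝ) (i : ℕ) :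
    1 ≤ layerB xbar i := le_max_right _ _

lemma layerU_nonneg {n : ℕ → ℕ} (xbar : ∀ i : ℕ, Fin (n i) → ℝ) (i : ℕ) :
    0 ≤ layerU xbar i := by
  cases i with
  | zero => exact zero_le_one
  | succ i => exact le_trans zero_le_one (layerB_ge_one xbar i)

/-- **Lemma 4 (finite-time convergence for deep GRUs).**
(a) For each layer `i` and each time `k` with `‖x^i(k)‖_∞ > 1`, the layer norm strictly
decreases; (b) there is a finite `k̄` depending only on the initial states and the weights
(not on the input sequence) such that `‖x^i(k)‖_∞ ≤ 1` for all layers `i` and `k ≥ k̄`. -/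
theorem deep_gru_finite_time_convergence {nu M : ℕ} {n : ℕ → ℕ}
    (Wz Wf Wr : ∀ i : ℕ, Matrix (Fin (n i)) (Fin (inDim nu n i)) ℝ)
    (Uz Uf Ur : ∀ i : ℕ, Matrix (Fin (n i)) (Fin (n i)) ℝ)
    (bz bf br : ∀ i : ℕ, Fin (n i) → ℝ)
    (xbar : ∀ i : ℕ, Fin (n i) → ℝ) :
    (∀ u : ℕ → Fin nu → ℝ, (∀ t, ‖u t‖ ≤ 1) →
      ∀ x : ℕ → ∀ i : ℕ, Fin (n i) → ℝ, x 0 = xbar →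
        (∀ k, 0 < M → x (k + 1) 0 =
          gruStep (Wz 0) (Wf 0) (Wr 0) (Uz 0) (Uf 0) (Ur 0) (bz 0) (bf 0) (br 0)
            (u k) (x k 0)) →
        (∀ k, ∀ i : ℕ, i + 1 < M → x (k + 1) (i + 1) =
          gruStep (Wz (i + 1)) (Wf (i + 1)) (Wr (i + 1)) (Uz (i + 1)) (Uf (i + 1))
            (Ur (i + 1)) (bz (i + 1)) (bf (i + 1)) (br (i + 1))
            (x (k + 1) i) (x k (i + 1))) →
        ∀ i < M, ∀ k, 1 < ‖x k i‖ → ‖x (k + 1) i‖ < ‖x k i‖) ∧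
    (∃ kbar : ℕ, ∀ u : ℕ → Fin nu → ℝ, (∀ t, ‖u t‖ ≤ 1) →
      ∀ x : ℕ → ∀ i : ℕ, Fin (n i) → ℝ, x 0 = xbar →
        (∀ k, 0 < M → x (k + 1) 0 =
          gruStep (Wz 0) (Wf 0) (Wr 0) (Uz 0) (Uf 0) (Ur 0) (bz 0) (bf 0) (br 0)
            (u k) (x k 0)) →
        (∀ k, ∀ i : ℕ, i + 1 < M → x (k + 1) (i + 1) =
          gruStep (Wz (i + 1)) (Wf (i + 1)) (Wr (i + 1)) (Uz (i + 1)) (Uf (i + 1))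
            (Ur (i + 1)) (bz (i + 1)) (bf (i + 1)) (br (i + 1))
            (x (k + 1) i) (x k (i + 1))) →
        ∀ i < M, ∀ k, kbar ≤ k → ‖x k i‖ ≤ 1) := by
  constructor
  · -- part (a)
    intro u hu x hx0 h0 hstep i hiM k hk
    cases i with
    | zero =>
      rw [h0 k hiM]
      exact gru_decrease _ _ _ _ _ _ _ _ _ _ _ hk
    | succ i =>
      rw [hstep k i hiM]
      exact gru_decrease _ _ _ _ _ _ _ _ _ _ _ hk
  · -- part (b)
    set B : ℕ → ℝ := layerB xbar with hBdef
    set ρ : ℕ → ℝ := fun i =>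
      Real.tanh (matNorm (Wr i) * layerU xbar i + matNorm (Ur i) * B i + ‖br i‖) with hρdef
    set c : ℕ → ℝ := fun i =>
      _root_.sigmoid (matNorm (Wz i) * layerU xbar i + matNorm (Uz i) * B i + ‖bz i‖) with hcdef
    have hB1 : ∀ i, 1 ≤ B i := layerB_ge_one xbar
    have hρ1 : ∀ i, ρ i < 1 := fun i => tanh_lt_one' _
    have hc0 : ∀ i, 0 < c i := fun i => _root_.sigmoid_pos _
    have hc1 : ∀ i, c i < 1 := fun i => _root_.sigmoid_lt_one _
    have hNex : ∀ i : ℕ, ∃ N : ℕ, c i ^ N * (B i - ρ i) ≤ 1 - ρ i := by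
      intro i
      rcases le_or_gt (B i) 1 with h | h
      · exact ⟨0, by rw [pow_zero, one_mul]; linarith⟩
      · have hb : 0 < B i - ρ i := by linarith [hρ1 i]
        obtain ⟨N, hN⟩ := exists_pow_lt_of_lt_one
          (show (0:ℝ) < (1 - ρ i) / (B i - ρ i) from div_pos (by linarith [hρ1 i]) hb) (hc1 i)
        exact ⟨N, le_of_lt ((lt_div_iff₀ hb).mp hN)⟩
    choose N hNs using hNex
    refine ⟨(Finset.range M).sup N, ?_⟩
    intro u hu x hx0 h0 hstep
    -- uniform boundedness of each layer
    have hbound : ∀ k, ∀ i, i < M → ‖x k i‖ ≤ B i := by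
      intro k
      induction k with
      | zero =>
        intro i hi
        rw [hx0]
        exact le_max_left _ _
      | succ k ih =>
        intro i hi
        cases i with
        | zero =>
          rw [h0 k hi]
          exact le_trans (gru_bounded _ _ _ _ _ _ _ _ _ _ _) (max_le (ih 0 hi) (hB1 0))
        | succ i =>
          rw [hstep k i hi]
          exact le_trans (gru_bounded _ _ _ _ _ _ _ _ _ _ _)
            (max_le (ih (i + 1) hi) (hB1 (i + 1)))
    -- geometric contraction of each layer
    have hcontr : ∀ k, ∀ i, i < M → ‖x k i‖ ≤ max 1 (ρ i + c i ^ k * (B i - ρ i)) := by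
      intro k
      induction k with
      | zero =>
        intro i hi
        rw [hx0]
        refine le_trans ?_ (le_max_right _ _)
        rw [pow_zero]
        calc ‖xbar i‖ ≤ B i := le_max_left _ _
          _ = ρ i + 1 * (B i - ρ i) := by ring
      | succ k ih =>
        intro i hi
        have hVle : max ‖x k i‖ 1 ≤ max 1 (ρ i + c i ^ k * (B i - ρ i)) :=
          max_le (ih i hi) (le_max_left _ _)
        have hstep2 : ‖x (k + 1) i‖ ≤ ρ i + c i * (max ‖x k i‖ 1 - ρ i) := by
          cases i with
          | zero =>
            rw [h0 k hi]
            exact gru_contract _ _ _ _ _ _ _ _ _ _ _ (layerU xbar 0) (B 0)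
              (layerU_nonneg xbar 0) (hB1 0) (hu k) (hbound k 0 hi)
          | succ i =>
            rw [hstep k i hi]
            exact gru_contract _ _ _ _ _ _ _ _ _ _ _ (layerU xbar (i + 1)) (B (i + 1))
              (layerU_nonneg xbar (i + 1)) (hB1 (i + 1))
              (hbound (k + 1) i (Nat.lt_of_succ_lt hi)) (hbound k (i + 1) hi)
        have hmono : ρ i + c i * (max ‖x k i‖ 1 - ρ i) ≤
            ρ i + c i * (max 1 (ρ i + c i ^ k * (B i - ρ i)) - ρ i) := by
          have := hc0 i
          nlinarith
        refine le_trans hstep2 (le_trans hmono ?_)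
        rcases max_cases 1 (ρ i + c i ^ k * (B i - ρ i)) with ⟨hV, hVle'⟩ | ⟨hV, hVlt⟩
        · rw [hV]
          refine le_trans ?_ (le_max_left _ _)
          have := hc1 i; have := hc0 i; have := hρ1 i
          nlinarith
        · rw [hV]
          refine le_trans (le_of_eq ?_) (le_max_right _ _)
          ring
    -- conclusion
    intro i hiM k hk
    have h1 := hcontr k i hiM
    have hkN : N i ≤ k := le_trans (Finset.le_sup (Finset.mem_range.mpr hiM)) hk
    have h2 : c i ^ k ≤ c i ^ N i :=
      pow_le_pow_of_le_one (hc0 i).le (hc1 i).le hkN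
    have h3 : 0 < B i - ρ i := by linarith [hρ1 i, hB1 i]
    have h4 : c i ^ k * (B i - ρ i) ≤ c i ^ N i * (B i - ρ i) :=
      mul_le_mul_of_nonneg_right h2 h3.le
    have h5 : ρ i + c i ^ k * (B i - ρ i) ≤ 1 := by linarith [hNs i]
    exact le_trans h1 (max_le le_rfl h5)
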